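/- For an R-submodule 𝓜 ⊆ O^{rk}, the following are equivalent: (a) the O-submodule of O^{rk} generated by 𝓜 is all of O^{rk}; (b) the image of 𝓜 in O^{rk}/z·O^{rk} spans this rk-dimensional k-vector space; (c) for every choice of valuation parameters 0 ≤ υ_0 < … < υ_{rk−1} < 1 and every 0 ≤ i ≤ rk−1, the component Δ^{(i)}(𝓜) contains 0. Moreover, (c) for one choice of the parameters implies (c) for every choice. -/

import Mathlib

open PowerSeries

/-- `ν f = n` : the order of the power series `f` equals `n`. -/
def HasOrd {k : Type*} [Semiring k] (f : PowerSeries k) (n : ℕ) : Prop :=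
  PowerSeries.coeff n f ≠ 0 ∧ ∀ m < n, PowerSeries.coeff m f = 0

/-- `υ(y) = v` for the cumulative valuation determined by `υ(ε_i) = υ i`:
`v` is the minimum over `i` of `ν(y_i) + υ_i`. -/
def CumOrd {k : Type*} [Semiring k] {rk : ℕ} (υ : Fin rk → ℝ)
    (y : Fin rk → PowerSeries k) (v : ℝ) : Prop :=
  (∃ (i : Fin rk) (n : ℕ), HasOrd (y i) n ∧ (n : ℝ) + υ i = v) ∧
  (∀ (i : Fin rk) (n : ℕ), HasOrd (y i) n → v ≤ (n : ℝ) + υ i)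

/-- The `i`-th component `Δ^{(i)}(S) = {a ∈ ℕ | a + υ_i ∈ υ(S \ {0})}`. -/
def DeltaComp {k : Type*} [Semiring k] {rk : ℕ} (υ : Fin rk → ℝ)
    (S : Set (Fin rk → PowerSeries k)) (i : Fin rk) : Set ℕ :=
  {a | ∃ y ∈ S, CumOrd υ y ((a : ℝ) + υ i)}

/-- Valuation parameters `0 ≤ υ_0 < υ_1 < … < υ_{rk-1} < 1`. -/
def ValidVal {rk : ℕ} (υ : Fin rk → ℝ) : Prop :=
  (∀ i, 0 ≤ υ i ∧ υ i < 1) ∧ StrictMono υ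

/-- If `𝓜` contains rows of a matrix whose constant-coefficient determinant is nonzero,
then the `O`-span of `𝓜` is everything. -/
lemma span_top_of_rows {k : Type*} [Field k] {rk : ℕ}
    (𝓜 : Submodule k (Fin rk → PowerSeries k))
    (y : Fin rk → (Fin rk → PowerSeries k)) (hy : ∀ i, y i ∈ 𝓜)
    (hdet : PowerSeries.constantCoeff (Matrix.det (Matrix.of y)) ≠ 0) :
    Submodule.span (PowerSeries k) (𝓜 : Set (Fin rk → PowerSeries k)) = ⊤ := by
  set M : Matrix (Fin rk) (Fin rk) (PowerSeries k) := Matrix.of y with hM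
  have hdu : IsUnit M.det :=
    PowerSeries.isUnit_iff_constantCoeff.mpr (IsUnit.mk0 _ hdet)
  have hMu : IsUnit M := (Matrix.isUnit_iff_isUnit_det M).mpr hdu
  obtain ⟨u, hu⟩ := hMu
  rw [eq_top_iff]
  intro v _
  have hNM : (↑u⁻¹ : Matrix (Fin rk) (Fin rk) (PowerSeries k)) * M = 1 := by
    rw [← hu]; exact u.inv_mul
  have hv : v = Matrix.vecMul (Matrix.vecMul v (↑u⁻¹)) M := by
    rw [Matrix.vecMul_vecMul, hNM, Matrix.vecMul_one]
  set c : Fin rk → PowerSeries k := Matrix.vecMul v (↑u⁻¹) with hc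
  have hv2 : v = ∑ i, c i • y i := by
    funext j
    rw [hv]
    simp only [Matrix.vecMul, dotProduct, Finset.sum_apply, Pi.smul_apply,
      smul_eq_mul]
    rfl
  rw [hv2]
  exact Submodule.sum_mem _ fun i _ =>
    Submodule.smul_mem _ _ (Submodule.subset_span (hy i))

lemma b_of_span {k : Type*} [Field k] {rk : ℕ}
    (𝓜 : Submodule k (Fin rk → PowerSeries k))
    (h : Submodule.span (PowerSeries k) (𝓜 : Set (Fin rk → PowerSeries k)) = ⊤) :
    ∀ v : Fin rk → PowerSeries k, ∃ y ∈ 𝓜, ∀ i,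
      PowerSeries.coeff 0 (y i) = PowerSeries.coeff 0 (v i) := by
  intro v
  have hv : v ∈ Submodule.span (PowerSeries k) (𝓜 : Set (Fin rk → PowerSeries k)) := by
    rw [h]; trivial
  induction hv using Submodule.span_induction with
  | mem w hw => exact ⟨w, hw, fun i => rfl⟩
  | zero => exact ⟨0, 𝓜.zero_mem, fun i => rfl⟩
  | add w₁ w₂ _ _ ih₁ ih₂ =>
    obtain ⟨y₁, hy₁, he₁⟩ := ih₁
    obtain ⟨y₂, hy₂, he₂⟩ := ih₂
    exact ⟨y₁ + y₂, 𝓜.add_mem hy₁ hy₂, fun i => by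
      simp only [Pi.add_apply, map_add, he₁ i, he₂ i]⟩
  | smul f w _ ih =>
    obtain ⟨y, hy, he⟩ := ih
    refine ⟨(PowerSeries.constantCoeff f) • y, 𝓜.smul_mem _ hy, fun i => ?_⟩
    simp only [Pi.smul_apply, map_smul, smul_eq_mul, he i]
    simp [PowerSeries.coeff_zero_eq_constantCoeff]

lemma span_of_b {k : Type*} [Field k] {rk : ℕ}
    (𝓜 : Submodule k (Fin rk → PowerSeries k))
    (h : ∀ v : Fin rk → PowerSeries k, ∃ y ∈ 𝓜, ∀ i,
      PowerSeries.coeff 0 (y i) = PowerSeries.coeff 0 (v i)) :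
    Submodule.span (PowerSeries k) (𝓜 : Set (Fin rk → PowerSeries k)) = ⊤ := by
  have hch : ∀ j : Fin rk, ∃ y ∈ 𝓜, ∀ i,
      PowerSeries.coeff 0 (y i) = (if i = j then 1 else 0 : k) := by
    intro j
    obtain ⟨y, hy, he⟩ := h (fun i => if i = j then 1 else 0)
    refine ⟨y, hy, fun i => ?_⟩
    rw [he i]
    by_cases hij : i = j <;> simp [hij]
  choose y hy he using hch
  apply span_top_of_rows 𝓜 y hy
  have : (Matrix.of y).map (PowerSeries.constantCoeff) = (1 : Matrix (Fin rk) (Fin rk) k) := by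
    ext j i
    have := he j i
    simp only [PowerSeries.coeff_zero_eq_constantCoeff] at this
    simp [Matrix.map_apply, Matrix.one_apply, this, eq_comm]
  rw [RingHom.map_det, RingHom.mapMatrix_apply, this]
  · simp

lemma c_of_b {k : Type*} [Field k] {rk : ℕ}
    (𝓜 : Submodule k (Fin rk → PowerSeries k))
    (h : ∀ v : Fin rk → PowerSeries k, ∃ y ∈ 𝓜, ∀ i,
      PowerSeries.coeff 0 (y i) = PowerSeries.coeff 0 (v i))
    (υ : Fin rk → ℝ) (hval : ValidVal υ) (i : Fin rk) :
    0 ∈ DeltaComp υ (𝓜 : Set (Fin rk → PowerSeries k)) i := by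
  obtain ⟨y, hy, he⟩ := h (fun j => if j = i then 1 else 0)
  have he' : ∀ j, PowerSeries.coeff 0 (y j) = if j = i then (1 : k) else 0 := by
    intro j; rw [he j]; by_cases hj : j = i <;> simp [hj]
  refine ⟨y, hy, ⟨i, 0, ⟨by rw [he' i]; simp, fun m hm => absurd hm (Nat.not_lt_zero m)⟩,
    rfl⟩, ?_⟩
  intro j n hord
  rcases Nat.eq_zero_or_pos n with rfl | h1
  · have hj : j = i := by
      by_contra hne
      exact hord.1 (by rw [he' j]; simp [hne])
    subst hj; exact le_refl _
  · have h1' : (1 : ℝ) ≤ n := by exact_mod_cast h1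
    have h2 := (hval.1 i).2
    have h3 := (hval.1 j).1
    push_cast
    linarith

lemma span_of_c_one {k : Type*} [Field k] {rk : ℕ}
    (𝓜 : Submodule k (Fin rk → PowerSeries k))
    (υ : Fin rk → ℝ) (hval : ValidVal υ)
    (hc : ∀ i : Fin rk, 0 ∈ DeltaComp υ (𝓜 : Set (Fin rk → PowerSeries k)) i) :
    Submodule.span (PowerSeries k) (𝓜 : Set (Fin rk → PowerSeries k)) = ⊤ := by
  choose y hy hcum using hc
  have hzero : ∀ i j : Fin rk, j < i → PowerSeries.constantCoeff (y i j) = 0 := by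
    intro i j hji
    by_contra hne
    have hord : HasOrd (y i j) 0 :=
      ⟨by simpa [PowerSeries.coeff_zero_eq_constantCoeff] using hne,
        fun m hm => absurd hm (Nat.not_lt_zero m)⟩
    have := (hcum i).2 j 0 hord
    have hlt : υ j < υ i := hval.2 hji
    simp only [Nat.cast_zero] at this
    linarith
  have hdiag : ∀ i : Fin rk, PowerSeries.constantCoeff (y i i) ≠ 0 := by
    intro i
    obtain ⟨j, n, hord, heq⟩ := (hcum i).1
    have hn : n = 0 := by
      by_contra hn0
      have h1 : (1 : ℝ) ≤ n := by exact_mod_cast Nat.one_le_iff_ne_zero.mpr hn0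
      have h2 := (hval.1 i).2
      have h3 := (hval.1 j).1
      simp only [Nat.cast_zero] at heq
      linarith
    subst hn
    have hji : j = i := by
      apply hval.2.injective
      simp only [Nat.cast_zero] at heq
      linarith
    subst hji
    simpa [PowerSeries.coeff_zero_eq_constantCoeff] using hord.1
  apply span_top_of_rows 𝓜 y hy
  rw [RingHom.map_det, RingHom.mapMatrix_apply]
  rw [Matrix.det_of_upperTriangular (M := (Matrix.of y).map (PowerSeries.constantCoeff))
    (fun i j hji => hzero i j hji)]
  exact Finset.prod_ne_zero_iff.mpr fun i _ => hdiag i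

/-- For an `R`-submodule `𝓜 ⊆ O^{rk}`, the following are equivalent:
(a) the `O`-submodule generated by `𝓜` is all of `O^{rk}`;
(b) the image of `𝓜` in `O^{rk}/z·O^{rk}` spans it;
(c) for every admissible choice of valuation parameters and every `i`, `0 ∈ Δ^{(i)}(𝓜)`.
Moreover (c) for one choice of the parameters implies (c) for every choice. -/
theorem standard_module_tfae
    {k : Type*} [Field k]
    (R : Subalgebra k (PowerSeries k)) (m : ℕ) (hm : 1 ≤ m)
    (hRm : ∀ f : PowerSeries k, PowerSeries.X ^ m * f ∈ R)
    (rk : ℕ) (hrk : 1 ≤ rk)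
    (𝓜 : Submodule k (Fin rk → PowerSeries k))
    (hstab : ∀ r ∈ R, ∀ y ∈ 𝓜, (fun i => r * y i) ∈ 𝓜) :
    ((Submodule.span (PowerSeries k) (𝓜 : Set (Fin rk → PowerSeries k)) = ⊤) ↔
        (∀ v : Fin rk → PowerSeries k, ∃ y ∈ 𝓜, ∀ i,
          PowerSeries.coeff 0 (y i) = PowerSeries.coeff 0 (v i))) ∧
    ((Submodule.span (PowerSeries k) (𝓜 : Set (Fin rk → PowerSeries k)) = ⊤) ↔
        (∀ υ : Fin rk → ℝ, ValidVal υ → ∀ i : Fin rk,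
          0 ∈ DeltaComp υ (𝓜 : Set (Fin rk → PowerSeries k)) i)) ∧
    ((∃ υ : Fin rk → ℝ, ValidVal υ ∧ ∀ i : Fin rk,
          0 ∈ DeltaComp υ (𝓜 : Set (Fin rk → PowerSeries k)) i) →
        (∀ υ : Fin rk → ℝ, ValidVal υ → ∀ i : Fin rk,
          0 ∈ DeltaComp υ (𝓜 : Set (Fin rk → PowerSeries k)) i)) := by
  have hrkpos : (0 : ℝ) < rk := by exact_mod_cast hrk
  have hval0 : ValidVal (fun i : Fin rk => (i : ℝ) / rk) := by
    constructor
    · intro i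
      constructor
      · positivity
      · rw [div_lt_one hrkpos]
        exact_mod_cast i.isLt
    · intro i j hij
      apply div_lt_div_of_pos_right _ hrkpos
      · exact_mod_cast hij
  refine ⟨⟨fun hs => b_of_span 𝓜 hs, fun hb => span_of_b 𝓜 hb⟩,
    ⟨fun hs υ hυ i => c_of_b 𝓜 (b_of_span 𝓜 hs) υ hυ i,
      fun hc => span_of_c_one 𝓜 _ hval0 (hc _ hval0)⟩,
    fun ⟨υ, hυ, hc⟩ υ' hυ' i =>
      c_of_b 𝓜 (b_of_span 𝓜 (span_of_c_one 𝓜 υ hυ hc)) υ' hυ' i⟩
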